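/- Let N be a 3×3 real matrix with det N = 1 such that −1 is not an eigenvalue. N has an eigenvalue on the unit circle if and only if tr N = tr cof N. -/

import Mathlib

open Matrix Polynomial

/-- The cofactor matrix of a square matrix: the transpose of the adjugate. -/
noncomputable def cof (N : Matrix (Fin 3) (Fin 3) ℝ) : Matrix (Fin 3) (Fin 3) ℝ :=
  (Matrix.adjugate N)ᵀ

lemma charpoly_eval_one (N : Matrix (Fin 3) (Fin 3) ℝ) (hdet : N.det = 1) :
    N.charpoly.eval 1 = (cof N).trace - N.trace := by
  have h1 : N.charpoly.eval 1 = (1 - N).det := by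
    rw [Matrix.charpoly, eval_det, matPolyEquiv_charmatrix]
    simp
  rw [h1, cof]
  rw [Matrix.trace_transpose, Matrix.det_fin_three] at *
  simp [Matrix.adjugate_fin_three, Matrix.trace, Fin.sum_univ_three, Matrix.one_apply]
  linear_combination (-1 : ℝ) * hdet

/-- Let `N` be a 3×3 real matrix with `det N = 1` such that `−1` is not an
eigenvalue.  Then `N` has an eigenvalue on the unit circle iff `tr N = tr cof N`. -/
theorem stmt_13 (N : Matrix (Fin 3) (Fin 3) ℝ) (hdet : N.det = 1)
    (hm1 : (-1 : ℂ) ∉ ((N.charpoly).map (algebraMap ℝ ℂ)).roots) :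
    (∃ μ ∈ ((N.charpoly).map (algebraMap ℝ ℂ)).roots, ‖μ‖ = 1)
      ↔ N.trace = (cof N).trace := by
  set q : ℂ[X] := (N.charpoly).map (algebraMap ℝ ℂ) with hq
  have hqmonic : q.Monic := (Matrix.charpoly_monic N).map _
  have hq0 : q ≠ 0 := hqmonic.ne_zero
  have hqdeg : q.natDegree = 3 := by
    rw [hq, (Matrix.charpoly_monic N).natDegree_map, Matrix.charpoly_natDegree_eq_dim]
    simp
  have heval : ∀ z : ℂ, q.eval z = aeval z N.charpoly := by
    intro z; rw [hq, eval_map, aeval_def]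
  have h1root : (1 : ℂ) ∈ q.roots ↔ N.charpoly.eval 1 = 0 := by
    rw [mem_roots hq0, IsRoot.def, hq, eval_map, Polynomial.eval₂_at_one]
    exact map_eq_zero (algebraMap ℝ ℂ)
  constructor
  · rintro ⟨μ, hμ, habs⟩
    have hone : (1 : ℂ) ∈ q.roots := by
      by_cases hconj : (starRingEnd ℂ) μ = μ
      · -- μ is real, so μ = ±1
        have him : μ.im = 0 := Complex.conj_eq_iff_im.mp hconj
        have hre : μ.re = 1 ∨ μ.re = -1 := by
          have h := Complex.sq_norm μ
          rw [habs, Complex.normSq_apply, him] at h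
          exact mul_self_eq_one_iff.mp (by nlinarith [h])
        rcases hre with h | h
        · have : μ = 1 := Complex.ext (by simp [h]) (by simp [him])
          rwa [this] at hμ
        · exfalso; apply hm1
          have : μ = -1 := Complex.ext (by simp [h]) (by simp [him])
          rwa [this] at hμ
      · -- μ is not real; conj μ is also a root, third root is 1
        have hμroot : q.IsRoot μ := (mem_roots hq0).mp hμ
        have hconjroot : (starRingEnd ℂ) μ ∈ q.roots := by
          rw [mem_roots hq0]
          have h : q.eval ((starRingEnd ℂ) μ) = (starRingEnd ℂ) (q.eval μ) := by
            rw [heval, heval, aeval_conj]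
          rw [IsRoot.def, h, hμroot.eq_zero, map_zero]
        -- product of roots equals 1
        have hprod : q.roots.prod = 1 := by
          have hmap : q = (N.map (algebraMap ℝ ℂ)).charpoly :=
            (Matrix.charpoly_map N (algebraMap ℝ ℂ)).symm
          have := Matrix.det_eq_prod_roots_charpoly (N.map (algebraMap ℝ ℂ))
          rw [← hmap] at this
          rw [← this]
          have : (algebraMap ℝ ℂ) N.det = ((algebraMap ℝ ℂ).mapMatrix N).det :=
            RingHom.map_det _ N
          rw [RingHom.mapMatrix_apply] at this
          rw [← this, hdet, _root_.map_one]
        have hcard : Multiset.card q.roots = 3 := by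
          rw [← hqdeg]
          exact (Polynomial.splits_iff_card_roots.mp (IsAlgClosed.splits q))
        have hc2 : (starRingEnd ℂ) μ ∈ q.roots.erase μ :=
          (Multiset.mem_erase_of_ne hconj).mpr hconjroot
        obtain ⟨lam, hlam⟩ : ∃ a, (q.roots.erase μ).erase ((starRingEnd ℂ) μ) = {a} := by
          apply Multiset.card_eq_one.mp
          rw [Multiset.card_erase_of_mem hc2, Multiset.card_erase_of_mem hμ, hcard]
          rfl
        have hμc : μ * (starRingEnd ℂ) μ = 1 := by
          rw [Complex.mul_conj, Complex.normSq_eq_norm_sq, habs]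
          norm_num
        have hlamval : lam = 1 := by
          have e1 : μ * (q.roots.erase μ).prod = q.roots.prod :=
            Multiset.prod_erase hμ
          have e2 : (starRingEnd ℂ) μ * ((q.roots.erase μ).erase ((starRingEnd ℂ) μ)).prod
              = (q.roots.erase μ).prod := Multiset.prod_erase hc2
          rw [hlam, Multiset.prod_singleton] at e2
          rw [← e2, hprod, ← mul_assoc, hμc, one_mul] at e1
          exact e1
        have : lam ∈ q.roots := by
          have h1 : lam ∈ (q.roots.erase μ).erase ((starRingEnd ℂ) μ) := by
            rw [hlam]; exact Multiset.mem_singleton_self lam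
          exact Multiset.mem_of_mem_erase (Multiset.mem_of_mem_erase h1)
        rwa [hlamval] at this
    have := h1root.mp hone
    rw [charpoly_eval_one N hdet] at this
    linarith [sub_eq_zero.mp this]
  · intro htr
    refine ⟨1, ?_, by simp⟩
    apply h1root.mpr
    rw [charpoly_eval_one N hdet, htr, sub_self]
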